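/- For a prime p and m ∈ N, the number of pairs consisting of a composition of m together with a choice of automorphism of the associated product group (Z/p^{t_1}Z) × ... × (Z/p^{t_r}Z) acting factorwise is (p-1)·(2p-1)^(m-1). -/

import Mathlib

namespace CompAutCount

open Finset

/-- weight of a block: `φ(p^t)` for `t ≥ 1`. -/
def f (p t : ℕ) : ℕ := p ^ (t - 1) * (p - 1)

/-- weight of a composition. -/
def wt (p : ℕ) {n : ℕ} (c : Composition n) : ℕ := (c.blocks.map (f p)).prod

lemma cons_headI_tail {l : List ℕ} (h : l ≠ []) : l.headI :: l.tail = l := by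
  cases l with
  | nil => exact absurd rfl h
  | cons a t => rfl

lemma blocks_ne_nil {n : ℕ} (hn : 0 < n) (c : Composition n) : c.blocks ≠ [] := by
  intro h
  have hs := c.blocks_sum
  rw [h] at hs
  simp at hs
  omega

lemma headI_pos {n : ℕ} (hn : 0 < n) (c : Composition n) : 0 < c.blocks.headI := by
  apply c.blocks_pos
  conv => rw [← cons_headI_tail (blocks_ne_nil hn c)]
  exact List.mem_cons_self

lemma headI_add_tail_sum {n : ℕ} (hn : 0 < n) (c : Composition n) :
    c.blocks.headI + c.blocks.tail.sum = n := by
  have := c.blocks_sum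
  rw [← cons_headI_tail (blocks_ne_nil hn c)] at this
  simpa using this

/-- Compositions of `n+1` are: a `1` prepended to a composition of `n`, or
a composition of `n` with its first block incremented. -/
def splitEquiv (n : ℕ) (hn : 0 < n) : Composition n ⊕ Composition n ≃ Composition (n + 1) where
  toFun x :=
    match x with
    | .inl c => ⟨1 :: c.blocks, by
        intro i hi
        rcases List.mem_cons.1 hi with rfl | hi
        · exact one_pos
        · exact c.blocks_pos hi, by
        have := c.blocks_sum
        simp [this, Nat.add_comm]⟩
    | .inr c => ⟨(c.blocks.headI + 1) :: c.blocks.tail, by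
        intro i hi
        rcases List.mem_cons.1 hi with rfl | hi
        · omega
        · exact c.blocks_pos (by
            conv => rw [← cons_headI_tail (blocks_ne_nil hn c)]
            exact List.mem_cons_of_mem _ hi), by
        have := headI_add_tail_sum hn c
        simp only [List.sum_cons]
        omega⟩
  invFun c :=
    if h1 : c.blocks.headI = 1 then
      .inl ⟨c.blocks.tail, fun hi => c.blocks_pos (by
          conv => rw [← cons_headI_tail (blocks_ne_nil (Nat.succ_pos n) c)]
          exact List.mem_cons_of_mem _ hi), by
        have := headI_add_tail_sum (Nat.succ_pos n) c
        omega⟩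
    else
      .inr ⟨(c.blocks.headI - 1) :: c.blocks.tail, by
        intro i hi
        have hp := headI_pos (Nat.succ_pos n) c
        rcases List.mem_cons.1 hi with rfl | hi
        · omega
        · exact c.blocks_pos (by
            conv => rw [← cons_headI_tail (blocks_ne_nil (Nat.succ_pos n) c)]
            exact List.mem_cons_of_mem _ hi), by
        have h1 := headI_add_tail_sum (Nat.succ_pos n) c
        have hp := headI_pos (Nat.succ_pos n) c
        simp only [List.sum_cons]
        omega⟩
  left_inv := by
    rintro (c | c)
    · simp only [List.headI_cons, List.tail_cons]
      exact dif_pos rfl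
    · have hp := headI_pos hn c
      simp only [List.headI_cons, List.tail_cons]
      refine (dif_neg (show ¬ (c.blocks.headI + 1 = 1) by omega)).trans ?_
      congr 1
      ext1
      simp only [Nat.add_sub_cancel]
      exact cons_headI_tail (blocks_ne_nil hn c)
  right_inv := by
    intro c
    have hp := headI_pos (Nat.succ_pos n) c
    by_cases h1 : c.blocks.headI = 1
    · simp only [dif_pos h1]
      ext1
      show 1 :: c.blocks.tail = c.blocks
      conv_rhs => rw [← cons_headI_tail (blocks_ne_nil (Nat.succ_pos n) c)]
      rw [h1]
    · simp only [dif_neg h1]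
      ext1
      simp only [List.headI_cons, List.tail_cons]
      rw [Nat.sub_add_cancel hp, cons_headI_tail (blocks_ne_nil (Nat.succ_pos n) c)]

instance comp1_subsingleton : Subsingleton (Composition 1) := by
  constructor
  intro a b
  have key : ∀ c : Composition 1, c.blocks = [1] := by
    intro c
    have h1 := headI_add_tail_sum one_pos c
    have h2 := headI_pos one_pos c
    have h3 : c.blocks.tail.sum = 0 := by omega
    have h4 : c.blocks.tail = [] := by
      apply List.eq_nil_iff_forall_not_mem.2
      intro x hx
      have hxp : 0 < x := c.blocks_pos (by
        conv => rw [← cons_headI_tail (blocks_ne_nil one_pos c)]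
        exact List.mem_cons_of_mem _ hx)
      have hxs : x ≤ c.blocks.tail.sum := List.single_le_sum (fun _ _ => Nat.zero_le _) _ hx
      omega
    rw [← cons_headI_tail (blocks_ne_nil one_pos c), h4]
    have : c.blocks.headI = 1 := by rw [h4] at h1; simpa using h1
    rw [this]
  ext1
  rw [key a, key b]

lemma sum_wt (p : ℕ) : ∀ n : ℕ, 0 < n →
    ∑ c : Composition n, wt p c = (p - 1) * (2 * p - 1) ^ (n - 1) := by
  intro n hn
  induction n, hn using Nat.le_induction with
  | base =>
    rw [Fintype.sum_subsingleton _ (Composition.ones 1)]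
    simp [wt, f, Composition.ones_blocks]
  | succ n hn ih =>
    rw [← Equiv.sum_comp (splitEquiv n hn) (wt p), Fintype.sum_sum_type]
    have hinl : ∀ c : Composition n, wt p ((splitEquiv n hn) (.inl c)) = (p - 1) * wt p c := by
      intro c
      simp [splitEquiv, wt, f]
    have hinr : ∀ c : Composition n, wt p ((splitEquiv n hn) (.inr c)) = p * wt p c := by
      intro c
      have hp := headI_pos hn c
      simp only [splitEquiv, wt, Equiv.coe_fn_mk, List.map_cons, List.prod_cons]
      conv_rhs => rw [← cons_headI_tail (blocks_ne_nil hn c)]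
      simp only [List.map_cons, List.prod_cons]
      rw [← Nat.mul_assoc]
      congr 1
      simp only [f, Nat.add_sub_cancel]
      rw [← Nat.mul_assoc]
      congr 1
      rw [← pow_succ']
      congr 1
      omega
    simp only [hinl, hinr, ← Finset.mul_sum, ih]
    have h2 : n + 1 - 1 = (n - 1) + 1 := by omega
    rw [h2, pow_succ]
    set a := p - 1 with ha
    set b := 2 * p - 1 with hb
    have hab : a + p = b := by omega
    rw [← Nat.mul_assoc, ← Nat.mul_assoc, ← Nat.add_mul]
    have hkey : a * a + p * a = b * a := by rw [← Nat.add_mul, hab]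
    rw [hkey]
    ring

end CompAutCount

theorem card_composition_automorphism_pairs (p m : ℕ) (hp : p.Prime) (hm : 0 < m) :
    Nat.card (Σ c : Composition m, ∀ i : Fin c.length, AddAut (ZMod (p ^ c.blocksFun i))) =
      (p - 1) * (2 * p - 1) ^ (m - 1) := by
  haveI hNZ : ∀ k : ℕ, NeZero (p ^ k) := fun k => ⟨pow_ne_zero k hp.pos.ne'⟩
  haveI hF : ∀ k : ℕ, Fintype (AddAut (ZMod (p ^ k))) := fun k =>
    Fintype.ofEquiv _ (ZMod.AddAutEquivUnits (p ^ k)).toEquiv.symm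
  rw [Nat.card_eq_fintype_card, Fintype.card_sigma]
  have key : ∀ c : Composition m,
      Fintype.card (∀ i : Fin c.length, AddAut (ZMod (p ^ c.blocksFun i))) =
        CompAutCount.wt p c := by
    intro c
    rw [Fintype.card_pi]
    have step : ∀ i : Fin c.length,
        Fintype.card (AddAut (ZMod (p ^ c.blocksFun i))) =
          CompAutCount.f p (c.blocksFun i) := by
      intro i
      rw [Fintype.card_congr ((ZMod.AddAutEquivUnits (p ^ c.blocksFun i)).toEquiv.trans Additive.toMul),
        ZMod.card_units_eq_totient, Nat.totient_prime_pow hp (c.one_le_blocksFun i)]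
      rfl
    simp only [step]
    rw [CompAutCount.wt, ← c.ofFn_blocksFun, List.map_ofFn, List.prod_ofFn]
    rfl
  simp only [key]
  exact CompAutCount.sum_wt p m hm
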